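/- In a standard gambling game, let v: X×Y → ℝ be continuous and excessive. Then for every (x₀,y₀) ∈ X×Y and every p ∈ Γ^∞(x₀), one has ṽ(p,y₀) ≤ v(x₀,y₀). -/

import Mathlib

open MeasureTheory Set Filter Topology

noncomputable section
namespace GG

abbrev PM (S : Type*) [MeasurableSpace S] := MeasureTheory.ProbabilityMeasure S

variable {S : Type*} [MeasurableSpace S]

/-- Dirac probability measure. -/
def dirac (s : S) : PM S := ⟨MeasureTheory.Measure.dirac s, inferInstance⟩

/-- Integral of a function against a probability measure (the affine extension `f̃`). -/
def iPM (f : S → ℝ) (p : PM S) : ℝ := ∫ s, f s ∂(p : MeasureTheory.Measure S)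

/-- `r` is the mixture `t p + (1-t) q`. -/
def IsMix (t : NNReal) (p q r : PM S) : Prop :=
  (r : MeasureTheory.Measure S)
    = (t : ENNReal) • (p : MeasureTheory.Measure S)
      + ((1 : ENNReal) - (t : ENNReal)) • (q : MeasureTheory.Measure S)

/-- Convexity of a set of probability measures. -/
def PMConvex (A : Set (PM S)) : Prop :=
  ∀ p ∈ A, ∀ q ∈ A, ∀ t : NNReal, t ≤ 1 → ∀ r : PM S, IsMix t p q r → r ∈ A

/-- Convexity of a set of pairs of probability measures. -/
def PMConvex2 (A : Set (PM S × PM S)) : Prop :=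
  ∀ a ∈ A, ∀ b ∈ A, ∀ t : NNReal, t ≤ 1 → ∀ c : PM S × PM S,
    IsMix t a.1 b.1 c.1 → IsMix t a.2 b.2 c.2 → c ∈ A

/-- Convex hull of a set of probability measures. -/
def convexHullPM (A : Set (PM S)) : Set (PM S) := ⋂₀ {T | A ⊆ T ∧ PMConvex T}

/-- Convex hull of a set of pairs of probability measures. -/
def convexHull2 (A : Set (PM S × PM S)) : Set (PM S × PM S) := ⋂₀ {T | A ⊆ T ∧ PMConvex2 T}

/-- Kantorovich–Rubinstein distance. -/
def dKR {S : Type*} [MeasurableSpace S] [PseudoMetricSpace S] (p q : PM S) : ℝ :=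
  sSup {r | ∃ f : S → ℝ, LipschitzWith 1 f ∧ r = |iPM f p - iPM f q|}

def argmaxOn {α : Type*} (f : α → ℝ) (A : Set α) : Set α := {p ∈ A | ∀ q ∈ A, f q ≤ f p}

def argminOn {α : Type*} (f : α → ℝ) (A : Set α) : Set α := {p ∈ A | ∀ q ∈ A, f p ≤ f q}

section Topo

variable [TopologicalSpace S] [OpensMeasurableSpace S]

/-- Graph of the linear extension `Γ̃`: the closed convex hull of the graph of `Γ`. -/
def tGraph (Γ : S → Set (PM S)) : Set (PM S × PM S) :=
  closure (convexHull2 {z | ∃ x : S, z.1 = dirac x ∧ z.2 ∈ Γ x})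

/-- The linear extension `Γ̃ : Δ(S) ⇉ Δ(S)`. -/
def tStep (Γ : S → Set (PM S)) (p : PM S) : Set (PM S) := {q | (p, q) ∈ tGraph Γ}

/-- Iterates `Γ̃ⁿ`, with `Γ̃⁰(p) = {p}` and `Γ̃^{n+1} = Γ̃ⁿ ∘ Γ̃`. -/
def tIter (Γ : S → Set (PM S)) : ℕ → PM S → Set (PM S)
  | 0, p => {p}
  | n + 1, p => {r | ∃ q ∈ tStep Γ p, r ∈ tIter Γ n q}

/-- The reachable set `Γ^∞(x)`: closure of `⋃ₙ Γ̃ⁿ(δ_x)`. -/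
def reach (Γ : S → Set (PM S)) (x : S) : Set (PM S) :=
  closure (⋃ n : ℕ, tIter Γ n (dirac x))

/-- There is a bounded measurable lower semicontinuous `φ` whose (expectation) argmax over
`R x` is exactly `{δ_x}`, for every `x`. -/
def AcyclicFor (R : S → Set (PM S)) : Prop :=
  ∃ φ : S → ℝ, Measurable φ ∧ (∃ C : ℝ, ∀ s, |φ s| ≤ C) ∧ LowerSemicontinuous φ ∧
    ∀ x : S, argmaxOn (iPM φ) (R x) = {dirac x}

/-- There is a bounded measurable upper semicontinuous `ψ` whose (expectation) argmin over
`R y` is exactly `{δ_y}`, for every `y`. -/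
def AcyclicForMin (R : S → Set (PM S)) : Prop :=
  ∃ ψ : S → ℝ, Measurable ψ ∧ (∃ C : ℝ, ∀ s, |ψ s| ≤ C) ∧ UpperSemicontinuous ψ ∧
    ∀ y : S, argminOn (iPM ψ) (R y) = {dirac y}

end Topo

section TwoPlayers

variable {X Y : Type*} [MeasurableSpace X] [MeasurableSpace Y]

/-- The bi-affine extension `ṽ(p,q) = ∫∫ v dp dq`. -/
def iXY (v : X × Y → ℝ) (p : PM X) (q : PM Y) : ℝ :=
  ∫ x, ∫ y, v (x, y) ∂(q : MeasureTheory.Measure Y) ∂(p : MeasureTheory.Measure X)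

/-- `v` is excessive: `v(x,y) = max_{p ∈ Γ(x)} ṽ(p,y)`. -/
def Excessive (Γ : X → Set (PM X)) (v : X × Y → ℝ) : Prop :=
  ∀ x : X, ∀ y : Y, IsGreatest ((fun p => iXY v p (dirac y)) '' Γ x) (v (x, y))

/-- `v` is depressive: `v(x,y) = min_{q ∈ Λ(y)} ṽ(x,q)`. -/
def Depressive (Λ : Y → Set (PM Y)) (v : X × Y → ℝ) : Prop :=
  ∀ x : X, ∀ y : Y, IsLeast ((fun q => iXY v (dirac x) q) '' Λ y) (v (x, y))

/-- `v` is balanced: `v(x,y) = max_{p ∈ Γ(x)} min_{q ∈ Λ(y)} ṽ(p,q)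
    = min_{q ∈ Λ(y)} max_{p ∈ Γ(x)} ṽ(p,q)`. -/
def Balanced (Γ : X → Set (PM X)) (Λ : Y → Set (PM Y)) (v : X × Y → ℝ) : Prop :=
  ∀ x : X, ∀ y : Y,
    IsGreatest {r | ∃ p ∈ Γ x, IsLeast (iXY v p '' Λ y) r} (v (x, y)) ∧
    IsLeast {r | ∃ q ∈ Λ y, IsGreatest ((fun p => iXY v p q) '' Γ x) r} (v (x, y))

variable [TopologicalSpace X] [OpensMeasurableSpace X] [TopologicalSpace Y] [OpensMeasurableSpace Y]

/-- Property P1: for all `(x,y)` there is `p ∈ Γ^∞(x)` with `v(x,y) = ṽ(p,y) ≤ ũ(p,y)`. -/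
def P1 (Γ : X → Set (PM X)) (u v : X × Y → ℝ) : Prop :=
  ∀ x : X, ∀ y : Y, ∃ p ∈ reach Γ x,
    v (x, y) = iXY v p (dirac y) ∧ iXY v p (dirac y) ≤ iXY u p (dirac y)

/-- Property P2: for all `(x,y)` there is `q ∈ Λ^∞(y)` with `v(x,y) = ṽ(x,q) ≥ ũ(x,q)`. -/
def P2 (Λ : Y → Set (PM Y)) (u v : X × Y → ℝ) : Prop :=
  ∀ x : X, ∀ y : Y, ∃ q ∈ reach Λ y,
    v (x, y) = iXY v (dirac x) q ∧ iXY u (dirac x) q ≤ iXY v (dirac x) q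

/-- `w` satisfies the Shapley fixed point equation for discount factor `lam`:
`w(x,y) = max_{p∈Γ(x)} min_{q∈Λ(y)} (λ u(x,y) + (1-λ) w̃(p,q))
        = min_{q∈Λ(y)} max_{p∈Γ(x)} (λ u(x,y) + (1-λ) w̃(p,q))`. -/
def ShapleyEq (Γ : X → Set (PM X)) (Λ : Y → Set (PM Y)) (u : X × Y → ℝ)
    (lam : ℝ) (w : X × Y → ℝ) : Prop :=
  ∀ x : X, ∀ y : Y,
    IsGreatest {r | ∃ p ∈ Γ x,
      IsLeast ((fun q => lam * u (x, y) + (1 - lam) * iXY w p q) '' Λ y) r} (w (x, y)) ∧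
    IsLeast {r | ∃ q ∈ Λ y,
      IsGreatest ((fun p => lam * u (x, y) + (1 - lam) * iXY w p q) '' Γ x) r} (w (x, y))

end TwoPlayers

/-- A standard gambling game: compact metric state spaces, continuous payoff,
continuous transition multifunctions with nonempty convex compact values,
leavable and non expansive. -/
structure StdGame (X Y : Type*) [MetricSpace X] [MeasurableSpace X] [OpensMeasurableSpace X]
    [MetricSpace Y] [MeasurableSpace Y] [OpensMeasurableSpace Y] where
  G : X → Set (PM X)
  L : Y → Set (PM Y)
  u : X × Y → ℝ
  u_cont : Continuous u
  G_ne : ∀ x, (G x).Nonempty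
  G_cvx : ∀ x, PMConvex (G x)
  G_cpt : ∀ x, IsCompact (G x)
  G_cont : ∀ ε : ℝ, 0 < ε → ∃ α : ℝ, 0 < α ∧ ∀ x x' : X, dist x x' ≤ α →
    ∀ p ∈ G x, ∃ p' ∈ G x', dKR p p' ≤ ε
  G_leav : ∀ x, dirac x ∈ G x
  G_nonexp : ∀ x x' : X, ∀ p ∈ G x, ∃ p' ∈ G x', dKR p p' ≤ dist x x'
  L_ne : ∀ y, (L y).Nonempty
  L_cvx : ∀ y, PMConvex (L y)
  L_cpt : ∀ y, IsCompact (L y)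
  L_cont : ∀ ε : ℝ, 0 < ε → ∃ α : ℝ, 0 < α ∧ ∀ y y' : Y, dist y y' ≤ α →
    ∀ q ∈ L y, ∃ q' ∈ L y', dKR q q' ≤ ε
  L_leav : ∀ y, dirac y ∈ L y
  L_nonexp : ∀ y y' : Y, ∀ q ∈ L y, ∃ q' ∈ L y', dKR q q' ≤ dist y y'

end GG

namespace GG

/-- if v is continuous and excessive then for every state (x0,y0) and every
p in the reachable set of Player 1 from x0, one has v(p,y0) <= v(x0,y0). -/
theorem statement7
    {X Y : Type*} [MetricSpace X] [CompactSpace X] [Nonempty X]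
    [MeasurableSpace X] [BorelSpace X]
    [MetricSpace Y] [CompactSpace Y] [Nonempty Y]
    [MeasurableSpace Y] [BorelSpace Y]
    (g : StdGame X Y)
    (v : X × Y → ℝ) (hv : Continuous v) (hex : Excessive g.G v)
    (x0 : X) (y0 : Y) (p : PM X) (hp : p ∈ reach g.G x0) :
    iXY v p (dirac y0) ≤ v (x0, y0) := by
  classical
  have hVcont : Continuous (fun x : X => v (x, y0)) :=
    hv.comp (continuous_id.prodMk continuous_const)
  set V : X → ℝ := fun x => v (x, y0) with hVdef
  set f : PM X → ℝ := fun p => ∫ x, V x ∂(p : MeasureTheory.Measure X) with hfdef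
  set Vb : BoundedContinuousFunction X ℝ :=
    BoundedContinuousFunction.mkOfCompact ⟨V, hVcont⟩ with hVbdef
  have hint : ∀ μ : MeasureTheory.Measure X, IsFiniteMeasure μ → Integrable V μ := by
    intro μ h
    exact Vb.integrable μ
  -- identify iXY with f
  have hfi : ∀ q : PM X, iXY v q (dirac y0) = f q := by
    intro q
    show (∫ x, ∫ y, v (x, y) ∂(MeasureTheory.Measure.dirac y0) ∂(q : MeasureTheory.Measure X)) = _
    simp [MeasureTheory.integral_dirac]
    rfl
  -- f at dirac
  have hdirac : ∀ x : X, f (dirac x) = v (x, y0) := by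
    intro x
    show (∫ x', V x' ∂(MeasureTheory.Measure.dirac x)) = _
    rw [MeasureTheory.integral_dirac]
  -- continuity of f
  have hfcont : Continuous f := by
    rw [continuous_iff_continuousAt]
    intro q
    have h := (MeasureTheory.ProbabilityMeasure.tendsto_iff_forall_integral_tendsto
      (F := 𝓝 q) (μs := (id : PM X → PM X)) (μ := q)).mp tendsto_id Vb
    exact h
  -- f is affine on mixtures
  have hmix_le : ∀ (t : NNReal), t ≤ 1 → ∀ a b c : PM X, IsMix t a b c →
      f c = (t : ℝ) * f a + (1 - (t : ℝ)) * f b := by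
    intro t ht a b c hc
    have hc' : (c : MeasureTheory.Measure X)
        = (t : ENNReal) • (a : MeasureTheory.Measure X)
          + ((1 : ENNReal) - (t : ENNReal)) • (b : MeasureTheory.Measure X) := hc
    have hi1 : Integrable V ((t : ENNReal) • (a : MeasureTheory.Measure X)) :=
      (hint _ inferInstance).smul_measure ENNReal.coe_ne_top
    have hi2 : Integrable V (((1 : ENNReal) - (t : ENNReal)) • (b : MeasureTheory.Measure X)) :=
      (hint _ inferInstance).smul_measure (by
        exact ne_top_of_le_ne_top ENNReal.one_ne_top tsub_le_self)
    have hle : (t : ENNReal) ≤ 1 := by exact_mod_cast ht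
    have htr : ((1 : ENNReal) - (t : ENNReal)).toReal = 1 - (t : ℝ) := by
      rw [ENNReal.toReal_sub_of_le hle ENNReal.one_ne_top]
      simp
    show (∫ x, V x ∂(c : MeasureTheory.Measure X)) = _
    rw [hc', MeasureTheory.integral_add_measure hi1 hi2,
      MeasureTheory.integral_smul_measure, MeasureTheory.integral_smul_measure, htr]
    simp [smul_eq_mul, hfdef]
  -- the closed convex set T
  set T : Set (PM X × PM X) := {z | f z.2 ≤ f z.1} with hTdef
  have hTclosed : IsClosed T := isClosed_le (hfcont.comp continuous_snd) (hfcont.comp continuous_fst)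
  have hTconv : PMConvex2 T := by
    intro a ha b hb t ht c hc1 hc2
    have e1 := hmix_le t ht a.1 b.1 c.1 hc1
    have e2 := hmix_le t ht a.2 b.2 c.2 hc2
    have ht' : (t : ℝ) ≤ 1 := by exact_mod_cast ht
    have ht0 : (0 : ℝ) ≤ (t : ℝ) := t.2
    simp only [hTdef, Set.mem_setOf_eq] at ha hb ⊢
    rw [e1, e2]
    nlinarith
  have hbase : {z : PM X × PM X | ∃ x : X, z.1 = dirac x ∧ z.2 ∈ g.G x} ⊆ T := by
    rintro ⟨p1, p2⟩ ⟨x, h1, h2⟩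
    have hub := (hex x y0).2 ⟨p2, h2, rfl⟩
    simp only [hTdef, Set.mem_setOf_eq]
    rw [show p1 = dirac x from h1, hdirac x, ← hfi p2]
    exact hub
  have hhull : convexHull2 {z : PM X × PM X | ∃ x : X, z.1 = dirac x ∧ z.2 ∈ g.G x} ⊆ T :=
    Set.sInter_subset_of_mem ⟨hbase, hTconv⟩
  have hgraph : tGraph g.G ⊆ T := closure_minimal hhull hTclosed
  have hiter : ∀ n : ℕ, ∀ a b : PM X, b ∈ tIter g.G n a → f b ≤ f a := by
    intro n
    induction n with
    | zero =>
      intro a b hb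
      rw [show b = a from hb]
    | succ n ih =>
      rintro a b ⟨r, hr, hb⟩
      exact (ih r b hb).trans (hgraph hr)
  have hclosed : IsClosed {q : PM X | f q ≤ v (x0, y0)} := isClosed_le hfcont continuous_const
  have hsub : (⋃ n : ℕ, tIter g.G n (dirac x0)) ⊆ {q : PM X | f q ≤ v (x0, y0)} := by
    intro q hq
    obtain ⟨n, hn⟩ := Set.mem_iUnion.mp hq
    exact (hiter n _ q hn).trans_eq (hdirac x0)
  have := closure_minimal hsub hclosed hp
  rw [hfi p]
  exact this

end GG
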